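/- Let r be a prime and let 𝓡′ be the subring of ℤ[a^{±1}, z^{±1}] generated by a, a⁻¹, z and (a + a⁻¹)z⁻¹. Suppose w ∈ 𝓡′ is written as w = Σ_i v_i(a) z^i with v_i(a) ∈ ℤ[a^{±1}]. Then w lies in the ideal (r, z^r) of 𝓡′ generated by r and z^r if and only if for every i ≤ r the coefficient v_i(a) lies in the ideal of ℤ[a^{±1}] generated by r and (a + a⁻¹)^{r−i}. -/

import Mathlib

open LaurentPolynomial

/-- The Laurent polynomial ring `ℤ[a^{±1}, z^{±1}]`, with `z` the outer variable
and `a` the inner variable. -/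
abbrev LL : Type := LaurentPolynomial (LaurentPolynomial ℤ)

/-- The variable `a`. -/
noncomputable def aA : LL := C (T 1)

/-- The variable `a⁻¹`. -/
noncomputable def aAinv : LL := C (T (-1))

/-- The variable `z`. -/
noncomputable def zZ : LL := T 1

/-- The variable `z⁻¹`. -/
noncomputable def zZinv : LL := T (-1)

/-- The subring `𝓡` of `ℤ[a^{±1}, z^{±1}]` generated by `a`, `a⁻¹`, `z` and
`(a + a⁻¹)z⁻¹`. -/
noncomputable def Rcal' : Subring LL :=
  Subring.closure {aA, aAinv, zZ, (aA + aAinv) * zZinv}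

lemma zZ_pow_mem (r : ℕ) : zZ ^ r ∈ Rcal' :=
  pow_mem (Subring.subset_closure (by simp)) r

noncomputable section Stmt4Aux

/-- `c = a + a⁻¹` in the inner Laurent ring. -/
def cc : LaurentPolynomial ℤ := T 1 + T (-1)

lemma gen4_eq : (aA + aAinv) * zZinv = (AddMonoidAlgebra.single (-1 : ℤ) cc : LL) := by
  rw [aA, aAinv, zZinv, ← map_add, single_eq_C_mul_T]
  rfl

lemma mem_imp_dvd {f : LL} (hf : f ∈ Rcal') : ∀ i : ℤ, cc ^ (-i).toNat ∣ f.coeff i := by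
  classical
  induction hf using Subring.closure_induction with
  | mem x hx =>
    intro i
    simp only [Set.mem_insert_iff, Set.mem_singleton_iff] at hx
    rcases hx with rfl | rfl | rfl | rfl
    · rcases eq_or_ne i 0 with rfl | hi
      · simp
      · simp [aA, hi]
    · rcases eq_or_ne i 0 with rfl | hi
      · simp
      · simp [aAinv, hi]
    · rcases eq_or_ne i 1 with rfl | hi
      · simp [zZ]
      · simp [zZ, Ne.symm hi]
    · rw [gen4_eq]
      rcases eq_or_ne i (-1) with rfl | hi
      · rw [AddMonoidAlgebra.coeff_single, Finsupp.single_apply, if_pos rfl]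
        simpa using dvd_refl cc
      · rw [AddMonoidAlgebra.coeff_single, Finsupp.single_apply, if_neg (fun h => hi h.symm)]
        exact dvd_zero _
  | zero => intro i; simp
  | one =>
    intro i
    rcases eq_or_ne i 0 with rfl | hi
    · simp
    · rw [show (1 : LL) = AddMonoidAlgebra.single (0:ℤ) (1 : LaurentPolynomial ℤ) from rfl,
        AddMonoidAlgebra.coeff_single, Finsupp.single_apply, if_neg (fun h => hi h.symm)]
      exact dvd_zero _
  | add x y hx hy ihx ihy =>
    intro i
    rw [AddMonoidAlgebra.coeff_add, Finsupp.add_apply]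
    exact dvd_add (ihx i) (ihy i)
  | neg x hx ihx =>
    intro i
    rw [AddMonoidAlgebra.coeff_neg, Finsupp.neg_apply]
    exact (ihx i).neg_right
  | mul x y hx hy ihx ihy =>
    intro i
    rw [AddMonoidAlgebra.coeff_mul, Finsupp.sum]
    apply Finset.dvd_sum
    intro a1 _
    rw [Finsupp.sum]
    apply Finset.dvd_sum
    intro a2 _
    split_ifs with h
    · refine dvd_trans (pow_dvd_pow cc (show (-i).toNat ≤ (-a1).toNat + (-a2).toNat by omega))
        (dvd_trans ?_ (mul_dvd_mul (ihx a1) (ihy a2)))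
      rw [pow_add]
    · exact dvd_zero _

lemma C_mem (v : LaurentPolynomial ℤ) : (C v : LL) ∈ Rcal' := by
  induction v using LaurentPolynomial.induction_on' with
  | add p q hp hq => rw [map_add]; exact add_mem hp hq
  | C_mul_T n a =>
    rw [map_mul]
    refine mul_mem ?_ ?_
    · have h1 : (C a : LaurentPolynomial ℤ) = ((a : ℤ) : LaurentPolynomial ℤ) := by
        rw [← map_intCast (C : ℤ →+* LaurentPolynomial ℤ) a, Int.cast_id]
      rw [h1, map_intCast]
      exact intCast_mem _ a
    · rcases le_or_gt 0 n with hn | hn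
      · have : (C (T n) : LL) = aA ^ n.toNat := by
          rw [aA, ← map_pow, T_pow, mul_one, Int.toNat_of_nonneg hn]
        rw [this]
        exact pow_mem (Subring.subset_closure (by simp)) _
      · have : (C (T n) : LL) = aAinv ^ (-n).toNat := by
          rw [aAinv, ← map_pow, T_pow]
          congr 2
          omega
        rw [this]
        exact pow_mem (Subring.subset_closure (by simp)) _

lemma single_mem {n : ℤ} {v : LaurentPolynomial ℤ} (h : cc ^ (-n).toNat ∣ v) :
    (AddMonoidAlgebra.single n v : LL) ∈ Rcal' := by
  rcases le_or_gt 0 n with hn | hn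
  · rw [single_eq_C_mul_T]
    refine mul_mem (C_mem v) ?_
    have : (T n : LL) = zZ ^ n.toNat := by
      rw [zZ, T_pow, mul_one, Int.toNat_of_nonneg hn]
    rw [this]
    have hz : zZ ∈ Rcal' := Subring.subset_closure (by simp)
    exact pow_mem hz n.toNat
  · obtain ⟨q, rfl⟩ := h
    have key : (AddMonoidAlgebra.single n (cc ^ (-n).toNat * q) : LL)
        = C q * ((aA + aAinv) * zZinv) ^ (-n).toNat := by
      rw [gen4_eq, AddMonoidAlgebra.single_pow, ← single_eq_C,
        AddMonoidAlgebra.single_mul_single]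
      congr 1
      · rw [smul_neg, nsmul_eq_mul, mul_one]
        omega
      · ring
    rw [key]
    have hg : (aA + aAinv) * zZinv ∈ Rcal' := Subring.subset_closure (by simp)
    exact mul_mem (C_mem q) (pow_mem hg _)


/-- `T` as a monoid hom from `Multiplicative ℤ`. -/
def TMhom (R : Type*) [CommSemiring R] : Multiplicative ℤ →* LaurentPolynomial R where
  toFun n := T (Multiplicative.toAdd n)
  map_one' := T_zero
  map_mul' x y := T_add _ _

/-- Reduction of coefficients mod `r`. -/
def phi (r : ℕ) : LaurentPolynomial ℤ →+* LaurentPolynomial (ZMod r) :=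
  AddMonoidAlgebra.liftNCRingHom ((C : ZMod r →+* LaurentPolynomial (ZMod r)).comp
    (Int.castRingHom (ZMod r))) (TMhom (ZMod r)) (fun _ _ => Commute.all _ _)

lemma phi_single (r : ℕ) (n : ℤ) (a : ℤ) :
    phi r (AddMonoidAlgebra.single n a) = AddMonoidAlgebra.single n ((a : ZMod r)) := by
  show AddMonoidAlgebra.liftNC _ _ (AddMonoidAlgebra.single n a) = _
  rw [AddMonoidAlgebra.liftNC_single, single_eq_C_mul_T]
  rfl

lemma phi_apply (r : ℕ) (f : LaurentPolynomial ℤ) (i : ℤ) :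
    (phi r f).coeff i = ((f.coeff i : ℤ) : ZMod r) := by
  induction f using AddMonoidAlgebra.induction with
  | zero => simp
  | single_add a b f ha hb ih =>
    rw [map_add, AddMonoidAlgebra.coeff_add, Finsupp.add_apply, phi_single, ih,
      AddMonoidAlgebra.coeff_add, Finsupp.add_apply,
      AddMonoidAlgebra.coeff_single, AddMonoidAlgebra.coeff_single,
      Finsupp.single_apply, Finsupp.single_apply]
    split_ifs <;> push_cast <;> ring

lemma key_dvd {r : ℕ} (hr : r.Prime) {k : ℕ} {p : LaurentPolynomial ℤ}
    (h : cc ^ k ∣ (r : LaurentPolynomial ℤ) * p) : cc ^ k ∣ p := by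
  obtain ⟨s, hs⟩ := h
  haveI := Fact.mk hr
  haveI : Nontrivial (ZMod r) := by
    haveI := Fact.mk hr.one_lt
    infer_instance
  have hrzero : ((r : ℕ) : LaurentPolynomial (ZMod r)) = 0 := by
    rw [← map_natCast (C : ZMod r →+* LaurentPolynomial (ZMod r)) r, ZMod.natCast_self, map_zero]
  have h0 : (phi r cc) ^ k * phi r s = 0 := by
    rw [← map_pow, ← map_mul, ← hs, map_mul, map_natCast, hrzero, zero_mul]
  have hccne : phi r cc ≠ 0 := by
    intro hcc
    have h1 : (phi r cc).coeff 1 = 0 := by rw [hcc]; rfl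
    rw [phi_apply] at h1
    have : cc.coeff 1 = 1 := by
      rw [cc]
      rw [AddMonoidAlgebra.coeff_add, Finsupp.add_apply]
      simp
    rw [this] at h1
    exact one_ne_zero (by exact_mod_cast h1)
  have hs0 : phi r s = 0 := by
    rcases mul_eq_zero.mp h0 with h' | h'
    · exact absurd h' (pow_ne_zero k hccne)
    · exact h'
  have hdvd : ∀ i : ℤ, (r : ℤ) ∣ s.coeff i := by
    intro i
    have h1 : (phi r s).coeff i = 0 := by rw [hs0]; rfl
    rw [phi_apply] at h1
    exact (ZMod.intCast_zmod_eq_zero_iff_dvd _ r).mp h1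
  set t : LaurentPolynomial ℤ :=
    AddMonoidAlgebra.ofCoeff (Finsupp.mapRange (fun z => z / (r : ℤ)) (by simp) s.coeff) with ht
  have hrsingle : ((r : ℕ) : LaurentPolynomial ℤ) = AddMonoidAlgebra.single (0 : ℤ) ((r : ℕ) : ℤ) := by
    rw [single_eq_C, map_natCast]
  have hst : s = (r : LaurentPolynomial ℤ) * t := by
    refine AddMonoidAlgebra.coeff_injective (Finsupp.ext fun i => ?_)
    rw [hrsingle]
    rw [AddMonoidAlgebra.coeff_single_mul_apply]
    rw [ht, AddMonoidAlgebra.coeff_ofCoeff, Finsupp.mapRange_apply, neg_zero, zero_add]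
    exact (Int.mul_ediv_cancel' (hdvd i)).symm
  have hrne : ((r : ℕ) : LaurentPolynomial ℤ) ≠ 0 := by
    rw [hrsingle]
    rw [Ne, AddMonoidAlgebra.single_eq_zero]
    exact_mod_cast hr.ne_zero
  refine ⟨t, mul_left_cancel₀ hrne ?_⟩
  rw [hs, hst]
  ring

lemma cc_def : cc = T 1 + T (-1) := rfl

end Stmt4Aux

theorem stmt_4 (r : ℕ) (hr : r.Prime) (w : Rcal')
    (u : ℤ → LaurentPolynomial ℤ) (s : Finset ℤ)
    (hw : (w : LL) = ∑ i ∈ s, C (u i) * T i)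
    (hu : ∀ i ∉ s, u i = 0) :
    w ∈ Ideal.span ({(r : Rcal'), ⟨zZ ^ r, zZ_pow_mem r⟩} : Set Rcal') ↔
      ∀ i : ℤ, i ≤ (r : ℤ) →
        u i ∈ Ideal.span ({(r : LaurentPolynomial ℤ),
          (T 1 + T (-1)) ^ ((r : ℤ) - i).toNat} : Set (LaurentPolynomial ℤ)) := by
  classical
  have hwsum : (w : LL) = ∑ i ∈ s, (AddMonoidAlgebra.single i (u i) : LL) := by
    rw [hw]; exact Finset.sum_congr rfl fun i _ => (single_eq_C_mul_T _ _).symm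
  have hcoeff : ∀ j : ℤ, (w : LL).coeff j = u j := by
    intro j
    rw [hwsum, AddMonoidAlgebra.coeff_sum, Finset.sum_apply']
    simp only [AddMonoidAlgebra.coeff_single, Finsupp.single_apply]
    rw [Finset.sum_ite_eq' s j u]
    by_cases hj : j ∈ s
    · simp [hj]
    · simp [hj, hu j hj]
  have hzr : (zZ ^ r : LL) = AddMonoidAlgebra.single (((r : ℕ)) : ℤ) (1 : LaurentPolynomial ℤ) := by
    rw [zZ, T_pow, mul_one]; rfl
  have hrL : ((r : ℕ) : LL) = AddMonoidAlgebra.single (0 : ℤ) (((r : ℕ)) : LaurentPolynomial ℤ) := by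
    rw [single_eq_C, map_natCast]
  rw [Ideal.mem_span_pair]
  constructor
  · rintro ⟨x, y, hxy⟩ i hi
    have hxyL : (x : LL) * ((r : ℕ) : LL) + (y : LL) * zZ ^ r = (w : LL) := by
      have := congrArg (fun t : Rcal' => (t : LL)) hxy
      push_cast at this
      exact this
    have h2 : u i = (x : LL).coeff i * ((r : ℕ) : LaurentPolynomial ℤ) + (y : LL).coeff (i - r) := by
      rw [← hcoeff i, ← hxyL, AddMonoidAlgebra.coeff_add, Finsupp.add_apply, hrL, hzr,
        AddMonoidAlgebra.coeff_mul_single_apply, AddMonoidAlgebra.coeff_mul_single_apply, neg_zero, add_zero,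
        ← sub_eq_add_neg, mul_one]
    have h3 : cc ^ ((r : ℤ) - i).toNat ∣ (y : LL).coeff (i - r) := by
      have h4 := mem_imp_dvd y.2 (i - r)
      have he : (-(i - (r : ℤ))).toNat = ((r : ℤ) - i).toNat := by omega
      rwa [he] at h4
    obtain ⟨qq, hqq⟩ := h3
    rw [Ideal.mem_span_pair]
    refine ⟨(x : LL).coeff i, qq, ?_⟩
    rw [← cc_def, h2, hqq]
    ring
  · intro h
    set s₁ := s.filter (fun i => i ≤ (r : ℤ)) with hs₁
    set s₂ := s.filter (fun i => ¬ i ≤ (r : ℤ)) with hs₂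
    have H : ∀ i : ℤ, ∃ pq : LaurentPolynomial ℤ × LaurentPolynomial ℤ,
        i ∈ s₁ → (u i = pq.1 * ((r : ℕ) : LaurentPolynomial ℤ)
            + pq.2 * cc ^ ((r : ℤ) - i).toNat ∧ cc ^ (-i).toNat ∣ pq.1) := by
      intro i
      by_cases hi : i ∈ s₁
      · have hile : i ≤ (r : ℤ) := (Finset.mem_filter.mp hi).2
        obtain ⟨a, b, hab⟩ := Ideal.mem_span_pair.mp (h i hile)
        rw [← cc_def] at hab
        have hki : cc ^ (-i).toNat ∣ u i := by
          have h5 := mem_imp_dvd w.2 i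
          rwa [hcoeff i] at h5
        have hkm : (cc : LaurentPolynomial ℤ) ^ (-i).toNat ∣ cc ^ ((r : ℤ) - i).toNat :=
          pow_dvd_pow _ (by omega)
        have hdvd2 : cc ^ (-i).toNat ∣ a * ((r : ℕ) : LaurentPolynomial ℤ) := by
          have h6 : a * ((r : ℕ) : LaurentPolynomial ℤ)
              = u i - b * cc ^ ((r : ℤ) - i).toNat := by rw [← hab]; ring
          rw [h6]
          exact dvd_sub hki (Dvd.dvd.mul_left hkm b)
        have hda : cc ^ (-i).toNat ∣ a := key_dvd hr (by rwa [mul_comm] at hdvd2)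
        exact ⟨(a, b), fun _ => ⟨hab.symm, hda⟩⟩
      · exact ⟨(0, 0), fun h' => absurd h' hi⟩
    choose pq hpq using H
    have hx : (∑ i ∈ s₁, (AddMonoidAlgebra.single i (pq i).1 : LL)) ∈ Rcal' :=
      sum_mem fun i hi => single_mem (hpq i hi).2
    have hy : ((∑ i ∈ s₁, (AddMonoidAlgebra.single (i - (r : ℕ)) ((pq i).2 * cc ^ ((r : ℤ) - i).toNat) : LL))
        + ∑ i ∈ s₂, (AddMonoidAlgebra.single (i - (r : ℕ)) (u i) : LL)) ∈ Rcal' := by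
      refine add_mem (sum_mem fun i hi => ?_) (sum_mem fun i hi => ?_)
      · apply single_mem
        have he : (-(i - ((r : ℕ) : ℤ))).toNat = ((r : ℤ) - i).toNat := by omega
        rw [he]
        exact dvd_mul_left _ _
      · apply single_mem
        have hile : ¬ i ≤ (r : ℤ) := (Finset.mem_filter.mp hi).2
        have he : (-(i - ((r : ℕ) : ℤ))).toNat = 0 := by omega
        rw [he, pow_zero]
        exact one_dvd _
    refine ⟨⟨_, hx⟩, ⟨_, hy⟩, ?_⟩
    apply Subtype.ext
    push_cast
    rw [hwsum, hrL, hzr]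
    rw [Finset.sum_mul, add_mul, Finset.sum_mul, Finset.sum_mul]
    simp only [AddMonoidAlgebra.single_mul_single, add_zero, sub_add_cancel, mul_one]
    rw [← add_assoc, ← Finset.sum_add_distrib]
    have hterm : ∀ i ∈ s₁,
        (AddMonoidAlgebra.single i ((pq i).1 * ((r : ℕ) : LaurentPolynomial ℤ)) : LL)
          + (AddMonoidAlgebra.single i ((pq i).2 * cc ^ ((r : ℤ) - i).toNat) : LL)
        = (AddMonoidAlgebra.single i (u i) : LL) := by
      intro i hi
      rw [← AddMonoidAlgebra.single_add, (hpq i hi).1]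
    rw [Finset.sum_congr rfl hterm]
    exact Finset.sum_filter_add_sum_filter_not s _ _
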